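/- Let Γ be a Hermitian matrix on ℂ^a ⊗ ℂ^d with 0 ≤ Γ ≤ I, let ψ ∈ ℂ^a be a unit vector, and suppose there exists a density matrix σ on ℂ^d with tr( Γ (ψψᴴ ⊗ σ) ) ≥ η for some η > 0. Then for every density matrix φ on ℂ^a, tr( Γ (φ ⊗ I_d/d) ) ≥ ( η − ‖ φ − ψψᴴ ‖_tr ) / d. In particular, every density matrix φ with tr( Γ (φ ⊗ I_d/d) ) ≤ η/(2d) satisfies ‖ φ − ψψᴴ ‖_tr ≥ η/2. -/

import Mathlib

open Matrix
open scoped ComplexOrder Kronecker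

/-- The trace distance `‖ρ − σ‖_tr = (1/2)·tr|ρ − σ|`, where `|M| = √(Mᴴ M)`. -/
noncomputable def traceDist {d : ℕ} (ρ σ : Matrix (Fin d) (Fin d) ℂ) : ℝ :=
  (1 / 2) * ((((Matrix.posSemidef_conjTranspose_mul_self (ρ - σ)).1.eigenvectorUnitary : Matrix (Fin d) (Fin d) ℂ) *
    Matrix.diagonal (((↑) : ℝ → ℂ) ∘ Real.sqrt ∘ (Matrix.posSemidef_conjTranspose_mul_self (ρ - σ)).1.eigenvalues) *
    (star (Matrix.posSemidef_conjTranspose_mul_self (ρ - σ)).1.eigenvectorUnitary : Matrix (Fin d) (Fin d) ℂ)).trace).re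

section Aux

set_option linter.unusedSectionVars false
set_option maxHeartbeats 1000000

variable {m n : Type*} [Fintype m] [Fintype n] [DecidableEq m] [DecidableEq n]

private noncomputable def psdSqrt {B : Matrix n n ℂ} (hB : B.IsHermitian) : Matrix n n ℂ :=
  (hB.eigenvectorUnitary : Matrix n n ℂ) *
    Matrix.diagonal (((↑) : ℝ → ℂ) ∘ Real.sqrt ∘ hB.eigenvalues) *
    (star hB.eigenvectorUnitary : Matrix n n ℂ)

private lemma kron_conjTranspose (A : Matrix m m ℂ) (B : Matrix n n ℂ) :
    (A ⊗ₖ B)ᴴ = Aᴴ ⊗ₖ Bᴴ := by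
  ext ⟨i, j⟩ ⟨k, l⟩
  simp [Matrix.conjTranspose_apply, Matrix.kroneckerMap_apply, mul_comm]

private lemma kron_psd {A : Matrix m m ℂ} {B : Matrix n n ℂ}
    (hA : A.PosSemidef) (hB : B.PosSemidef) : (A ⊗ₖ B).PosSemidef := by
  exact hA.kronecker hB

private lemma psd_trace_nonneg {A : Matrix n n ℂ} (hA : A.PosSemidef) : 0 ≤ A.trace := by
  rw [Matrix.trace]
  apply Finset.sum_nonneg
  intro i _
  exact hA.diag_nonneg

open scoped MatrixOrder in
private lemma psd_mul_trace_nonneg {A B : Matrix n n ℂ} (hA : A.PosSemidef) (hB : B.PosSemidef) :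
    0 ≤ ((A * B).trace).re := by
  have hA0 : 0 ≤ A := Matrix.nonneg_iff_posSemidef.mpr hA
  have h2 : (CFC.sqrt A * B * CFC.sqrt A).trace = (A * B).trace := by
    rw [Matrix.trace_mul_cycle, CFC.sqrt_mul_sqrt_self A hA0]
  have h3 : (CFC.sqrt A * B * CFC.sqrt A).PosSemidef := by
    have := hB.mul_mul_conjTranspose_same (CFC.sqrt A)
    rwa [← Matrix.star_eq_conjTranspose, (CFC.sqrt_nonneg A).isSelfAdjoint.star_eq] at this
  have h4 := psd_trace_nonneg h3
  rw [h2] at h4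
  exact (Complex.le_def.mp h4).1

private lemma conj_diag_psd {U : Matrix n n ℂ} (hU : U ∈ Matrix.unitaryGroup n ℂ)
    (f : n → ℝ) (hf : ∀ i, 0 ≤ f i) :
    (U * Matrix.diagonal (fun i => (f i : ℂ)) * star U).PosSemidef := by
  rw [Matrix.star_eq_conjTranspose]
  exact (Matrix.posSemidef_diagonal_iff.mpr fun i =>
    Complex.zero_le_real.mpr (hf i)).mul_mul_conjTranspose_same U

open scoped MatrixOrder in
private lemma abs_parts {A : Matrix n n ℂ} (hA : A.IsHermitian) :
    (psdSqrt (Matrix.posSemidef_conjTranspose_mul_self A).1 + A).PosSemidef ∧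
    (psdSqrt (Matrix.posSemidef_conjTranspose_mul_self A).1 - A).PosSemidef := by
  set U : Matrix n n ℂ := (hA.eigenvectorUnitary : Matrix n n ℂ) with hUdef
  have hUmem : U ∈ Matrix.unitaryGroup n ℂ := hA.eigenvectorUnitary.2
  have hU' : star U * U = 1 := Matrix.mem_unitaryGroup_iff'.mp hUmem
  have hspec : A = U * Matrix.diagonal (RCLike.ofReal ∘ hA.eigenvalues) * star U :=
    hA.spectral_theorem.trans (Unitary.conjStarAlgAut_apply _ _)
  set lam := hA.eigenvalues with hlam
  set D : Matrix n n ℂ := Matrix.diagonal (fun i => ((|lam i| : ℝ) : ℂ)) with hD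
  have hDlam : Matrix.diagonal (RCLike.ofReal ∘ lam) =
      Matrix.diagonal (fun i => ((lam i : ℝ) : ℂ)) := rfl
  have hS'psd : (U * D * star U).PosSemidef := conj_diag_psd hUmem _ fun i => abs_nonneg _
  have hsq : (U * D * star U) ^ 2 = Aᴴ * A := by
    rw [hA.eq, pow_two]
    have key : U * D * star U * (U * D * star U) = U * (D * (star U * U) * D) * star U := by
      simp only [Matrix.mul_assoc]
    have key2 : U * Matrix.diagonal (RCLike.ofReal ∘ lam) * star U *
        (U * Matrix.diagonal (RCLike.ofReal ∘ lam) * star U) =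
        U * (Matrix.diagonal (RCLike.ofReal ∘ lam) * (star U * U) *
          Matrix.diagonal (RCLike.ofReal ∘ lam)) * star U := by
      simp only [Matrix.mul_assoc]
    conv_rhs => rw [hspec]
    rw [key, key2, hU', Matrix.mul_one, Matrix.mul_one]
    have hdd : D * D = Matrix.diagonal (RCLike.ofReal ∘ lam) *
        Matrix.diagonal (RCLike.ofReal ∘ lam) := by
      rw [hD, hDlam, Matrix.diagonal_mul_diagonal, Matrix.diagonal_mul_diagonal,
        Matrix.diagonal_eq_diagonal_iff]
      intro i
      rw [← Complex.ofReal_mul, ← Complex.ofReal_mul, abs_mul_abs_self]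
    rw [hdd]
  have hSeq : psdSqrt (Matrix.posSemidef_conjTranspose_mul_self A).1 = U * D * star U := by
    have hB0 : 0 ≤ Aᴴ * A :=
      Matrix.nonneg_iff_posSemidef.mpr (Matrix.posSemidef_conjTranspose_mul_self A)
    have h1 : psdSqrt (Matrix.posSemidef_conjTranspose_mul_self A).1 = cfc Real.sqrt (Aᴴ * A) := by
      rw [(Matrix.posSemidef_conjTranspose_mul_self A).1.cfc_eq, Matrix.IsHermitian.cfc,
        Unitary.conjStarAlgAut_apply]
      rfl
    rw [h1, ← cfcₙ_eq_cfc (f := Real.sqrt) (a := Aᴴ * A) Real.continuous_sqrt.continuousOn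
      Real.sqrt_zero, ← CFC.sqrt_eq_real_sqrt _ hB0,
      CFC.sqrt_unique (by rw [← pow_two]; exact hsq) (Matrix.nonneg_iff_posSemidef.mpr hS'psd)]
  constructor
  · rw [hSeq]
    have heq : U * D * star U + A =
        U * Matrix.diagonal (fun i => ((|lam i| + lam i : ℝ) : ℂ)) * star U := by
      conv_lhs => rw [hspec, hDlam]
      have : Matrix.diagonal (fun i => ((|lam i| + lam i : ℝ) : ℂ)) =
          D + Matrix.diagonal (fun i => ((lam i : ℝ) : ℂ)) := by
        rw [hD, Matrix.diagonal_add, Matrix.diagonal_eq_diagonal_iff]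
        intro i
        push_cast
        ring
      rw [this, Matrix.mul_add, Matrix.add_mul]
    rw [heq]
    exact conj_diag_psd hUmem _ fun i => by linarith [neg_abs_le (lam i)]
  · rw [hSeq]
    have heq : U * D * star U - A =
        U * Matrix.diagonal (fun i => ((|lam i| - lam i : ℝ) : ℂ)) * star U := by
      conv_lhs => rw [hspec, hDlam]
      have : Matrix.diagonal (fun i => ((|lam i| - lam i : ℝ) : ℂ)) =
          D - Matrix.diagonal (fun i => ((lam i : ℝ) : ℂ)) := by
        rw [hD, Matrix.diagonal_sub, Matrix.diagonal_eq_diagonal_iff]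
        intro i
        push_cast
        ring
      rw [this, Matrix.mul_sub, Matrix.sub_mul]
    rw [heq]
    exact conj_diag_psd hUmem _ fun i => by linarith [le_abs_self (lam i)]

private lemma one_sub_psd {A : Matrix n n ℂ} (hA : A.PosSemidef) (htr : A.trace = 1) :
    ((1 : Matrix n n ℂ) - A).PosSemidef := by
  set U : Matrix n n ℂ := (hA.1.eigenvectorUnitary : Matrix n n ℂ) with hUdef
  have hUmem : U ∈ Matrix.unitaryGroup n ℂ := hA.1.eigenvectorUnitary.2
  have hU : U * star U = 1 := Matrix.mem_unitaryGroup_iff.mp hUmem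
  have hU' : star U * U = 1 := Matrix.mem_unitaryGroup_iff'.mp hUmem
  have hspec : A = U * Matrix.diagonal (RCLike.ofReal ∘ hA.1.eigenvalues) * star U :=
    hA.1.spectral_theorem.trans (Unitary.conjStarAlgAut_apply _ _)
  set lam := hA.1.eigenvalues with hlam
  have hsum : ∑ i, lam i = 1 := by
    have h1 : A.trace = ∑ i, ((lam i : ℝ) : ℂ) := by
      conv_lhs => rw [hspec]
      rw [Matrix.trace_mul_comm, ← Matrix.mul_assoc, hU', Matrix.one_mul,
        Matrix.trace_diagonal]
      rfl
    rw [htr] at h1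
    have h2 := h1.symm
    rw [← Complex.ofReal_sum] at h2
    exact_mod_cast h2
  have hle : ∀ i, lam i ≤ 1 := by
    intro i
    rw [← hsum]
    exact Finset.single_le_sum (fun j _ => hA.eigenvalues_nonneg j) (Finset.mem_univ i)
  have heq : (1 : Matrix n n ℂ) - A =
      U * Matrix.diagonal (fun i => ((1 - lam i : ℝ) : ℂ)) * star U := by
    have h1 : (1 : Matrix n n ℂ) = U * 1 * star U := by rw [Matrix.mul_one, hU]
    conv_lhs => rw [h1, hspec]
    have : Matrix.diagonal (fun i => ((1 - lam i : ℝ) : ℂ)) =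
        1 - Matrix.diagonal (fun i => ((lam i : ℝ) : ℂ)) := by
      rw [← Matrix.diagonal_one, Matrix.diagonal_sub, Matrix.diagonal_eq_diagonal_iff]
      intro i
      push_cast
      ring
    rw [this, Matrix.mul_sub, Matrix.sub_mul]
    rfl
  rw [heq]
  exact conj_diag_psd hUmem _ fun i => by linarith [hle i]

private lemma vecMulVec_psd {a : ℕ} (ψ : Fin a → ℂ) :
    (Matrix.vecMulVec ψ (star ψ)).PosSemidef := by
  exact Matrix.posSemidef_vecMulVec_self_star ψ

private lemma vecMulVec_trace {a : ℕ} (ψ : Fin a → ℂ) (hψ : star ψ ⬝ᵥ ψ = 1) :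
    (Matrix.vecMulVec ψ (star ψ)).trace = 1 := by
  rw [Matrix.trace, ← hψ]
  simp [Matrix.diag, Matrix.vecMulVec_apply, dotProduct, mul_comm]

end Aux

set_option maxHeartbeats 1000000

/-- Let `0 ≤ Γ ≤ I` on `ℂ^a ⊗ ℂ^d`, `ψ ∈ ℂ^a` a unit vector, and suppose
some density matrix `σ` satisfies `tr(Γ(ψψᴴ ⊗ σ)) ≥ η > 0`. Then every density matrix `φ`
satisfies `tr(Γ(φ ⊗ I/d)) ≥ (η − ‖φ − ψψᴴ‖_tr)/d`; in particular if
`tr(Γ(φ ⊗ I/d)) ≤ η/(2d)` then `‖φ − ψψᴴ‖_tr ≥ η/2`. -/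
theorem stmt_13 {a d : ℕ} (hd : 0 < d)
    (Γ : Matrix (Fin a × Fin d) (Fin a × Fin d) ℂ)
    (hΓ : Γ.PosSemidef) (hΓI : ((1 : Matrix (Fin a × Fin d) (Fin a × Fin d) ℂ) - Γ).PosSemidef)
    (ψ : Fin a → ℂ) (hψ : star ψ ⬝ᵥ ψ = 1)
    (η : ℝ) (hη : 0 < η)
    (σ : Matrix (Fin d) (Fin d) ℂ) (hσ : σ.PosSemidef) (hσtr : σ.trace = 1)
    (hacc : η ≤ ((Γ * (Matrix.vecMulVec ψ (star ψ) ⊗ₖ σ)).trace).re) :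
    ∀ φ : Matrix (Fin a) (Fin a) ℂ, φ.PosSemidef → φ.trace = 1 →
      ((η - traceDist φ (Matrix.vecMulVec ψ (star ψ))) / d ≤
        ((Γ * (φ ⊗ₖ (((d : ℂ))⁻¹ • (1 : Matrix (Fin d) (Fin d) ℂ)))).trace).re) ∧
      (((Γ * (φ ⊗ₖ (((d : ℂ))⁻¹ • (1 : Matrix (Fin d) (Fin d) ℂ)))).trace).re ≤ η / (2 * d) →
        η / 2 ≤ traceDist φ (Matrix.vecMulVec ψ (star ψ))) := by
  intro φ hφ hφtr
  have hd' : (0:ℝ) < d := by exact_mod_cast hd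
  set ρ : Matrix (Fin a) (Fin a) ℂ := Matrix.vecMulVec ψ (star ψ) with hρdef
  have hρ : ρ.PosSemidef := vecMulVec_psd ψ
  have hρtr : ρ.trace = 1 := vecMulVec_trace ψ hψ
  set Δ : Matrix (Fin a) (Fin a) ℂ := φ - ρ with hΔdef
  have hΔherm : Δ.IsHermitian := hφ.1.sub hρ.1
  set S : Matrix (Fin a) (Fin a) ℂ := psdSqrt (Matrix.posSemidef_conjTranspose_mul_self Δ).1
    with hSdef
  obtain ⟨hP, hN⟩ := abs_parts hΔherm
  rw [← hSdef] at hP hN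
  have hΔtr : Δ.trace = 0 := by rw [hΔdef, Matrix.trace_sub, hφtr, hρtr, sub_self]
  have hT : traceDist φ ρ = (1/2) * (S.trace).re := rfl
  have hone_sub : ((1 : Matrix (Fin d) (Fin d) ℂ) - σ).PosSemidef := one_sub_psd hσ hσtr
  have he1 : 0 ≤ ((Γ * (φ ⊗ₖ ((1 : Matrix (Fin d) (Fin d) ℂ) - σ))).trace).re :=
    psd_mul_trace_nonneg hΓ (kron_psd hφ hone_sub)
  have hPk : 0 ≤ ((Γ * ((S + Δ) ⊗ₖ σ)).trace).re :=
    psd_mul_trace_nonneg hΓ (kron_psd hP hσ)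
  have hNk : ((Γ * ((S - Δ) ⊗ₖ σ)).trace).re ≤ (((S - Δ) ⊗ₖ σ).trace).re := by
    have h0 : 0 ≤ ((((1 : Matrix (Fin a × Fin d) (Fin a × Fin d) ℂ) - Γ) *
        ((S - Δ) ⊗ₖ σ)).trace).re := psd_mul_trace_nonneg hΓI (kron_psd hN hσ)
    rw [Matrix.sub_mul, Matrix.one_mul, Matrix.trace_sub, Complex.sub_re] at h0
    linarith
  have hNtr : (((S - Δ) ⊗ₖ σ).trace).re = (S.trace).re := by
    rw [Matrix.trace_kronecker, hσtr, mul_one, Matrix.trace_sub, hΔtr, sub_zero]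
  have hsplit1 : ((Γ * (φ ⊗ₖ (1 : Matrix (Fin d) (Fin d) ℂ))).trace).re =
      ((Γ * (φ ⊗ₖ σ)).trace).re +
        ((Γ * (φ ⊗ₖ ((1 : Matrix (Fin d) (Fin d) ℂ) - σ))).trace).re := by
    have h : φ ⊗ₖ (1 : Matrix (Fin d) (Fin d) ℂ) =
        φ ⊗ₖ σ + φ ⊗ₖ ((1 : Matrix (Fin d) (Fin d) ℂ) - σ) := by
      have e : σ + ((1 : Matrix (Fin d) (Fin d) ℂ) - σ) = 1 := by abel
      rw [← Matrix.kronecker_add, e]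
    rw [h, Matrix.mul_add, Matrix.trace_add, Complex.add_re]
  have hsplit2 : ((Γ * (φ ⊗ₖ σ)).trace).re =
      ((Γ * (ρ ⊗ₖ σ)).trace).re + ((Γ * (Δ ⊗ₖ σ)).trace).re := by
    have h : φ ⊗ₖ σ = ρ ⊗ₖ σ + Δ ⊗ₖ σ := by
      have e : ρ + Δ = φ := by rw [hΔdef]; abel
      rw [← Matrix.add_kronecker, e]
    rw [h, Matrix.mul_add, Matrix.trace_add, Complex.add_re]
  have hsplit3 : ((Γ * ((S + Δ) ⊗ₖ σ)).trace).re =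
      ((Γ * ((S - Δ) ⊗ₖ σ)).trace).re +
        (((Γ * (Δ ⊗ₖ σ)).trace).re + ((Γ * (Δ ⊗ₖ σ)).trace).re) := by
    have h : (S + Δ) ⊗ₖ σ = (S - Δ) ⊗ₖ σ + (Δ ⊗ₖ σ + Δ ⊗ₖ σ) := by
      have e : (S - Δ) + (Δ + Δ) = S + Δ := by abel
      rw [← Matrix.add_kronecker, ← Matrix.add_kronecker, e]
    rw [h, Matrix.mul_add, Matrix.mul_add, Matrix.trace_add, Matrix.trace_add,
      Complex.add_re, Complex.add_re]
  have hmain : η - traceDist φ ρ ≤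
      ((Γ * (φ ⊗ₖ (1 : Matrix (Fin d) (Fin d) ℂ))).trace).re := by
    rw [hT]
    linarith
  have hRHS : ((Γ * (φ ⊗ₖ (((d : ℂ))⁻¹ • (1 : Matrix (Fin d) (Fin d) ℂ)))).trace).re =
      (d:ℝ)⁻¹ * ((Γ * (φ ⊗ₖ (1 : Matrix (Fin d) (Fin d) ℂ))).trace).re := by
    rw [Matrix.kronecker_smul, mul_smul_comm, Matrix.trace_smul, smul_eq_mul]
    have h : ((d : ℂ))⁻¹ = (((d:ℝ)⁻¹ : ℝ) : ℂ) := by push_cast; ring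
    rw [h, Complex.re_ofReal_mul]
  constructor
  · rw [hRHS, div_eq_inv_mul]
    exact mul_le_mul_of_nonneg_left hmain (by positivity)
  · intro h2
    rw [hRHS] at h2
    have h3 := mul_le_mul_of_nonneg_left h2 hd'.le
    rw [← mul_assoc, mul_inv_cancel₀ hd'.ne', one_mul] at h3
    have h4 : (d:ℝ) * (η / (2 * d)) = η / 2 := by
      field_simp
    rw [h4] at h3
    linarith
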